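/- arXiv:2211.15256 — 2 statements merged into one kernel-verified Lean document; each statement's English description precedes it below -/
import Mathlib

section
/- If φ ∈ Φ_w(Ω) and u ∈ BV^φ(Ω), then ‖u‖_{ρ_{V,φ}} ≤ V_φ(u) ≤ 2‖u‖_{ρ_{V,φ}}, where ‖u‖_{ρ_{V,φ}} := inf{ λ > 0 : ρ_{V,φ}(u/λ) ≤ 1 } is the Luxemburg seminorm of the dual modular. -/
open MeasureTheory Filter Set Topology Metric
open scoped ENNReal NNReal

noncomputable section

/-- Euclidean space `ℝⁿ`. -/
abbrev Euc (n : ℕ) := EuclideanSpace ℝ (Fin n)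

variable {n : ℕ}

/-- The divergence of a vector field on `ℝⁿ`. -/
def divg (w : Euc n → Euc n) (x : Euc n) : ℝ :=
  ∑ i, fderiv ℝ w x (EuclideanSpace.single i 1) i

/-- `C¹` vector fields with compact support contained in `Ω`. -/
def IsTestField (Ω : Set (Euc n)) (w : Euc n → Euc n) : Prop :=
  ContDiff ℝ 1 w ∧ HasCompactSupport w ∧ tsupport w ⊆ Ω

/-- `Ω` is a bounded domain. -/
def IsBoundedDomain (Ω : Set (Euc n)) : Prop :=
  IsOpen Ω ∧ IsConnected Ω ∧ Bornology.IsBounded Ω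

/-- The modular `ρ_φ(f) = ∫_Ω φ(x,|f(x)|) dx` for scalar functions. -/
def modular (Ω : Set (Euc n)) (φ : Euc n → ℝ → ℝ≥0∞) (f : Euc n → ℝ) : ℝ≥0∞ :=
  ∫⁻ x in Ω, φ x |f x|

/-- The modular `ρ_φ(|w|) = ∫_Ω φ(x,|w(x)|) dx` for vector-valued functions. -/
def vmodular (Ω : Set (Euc n)) (φ : Euc n → ℝ → ℝ≥0∞) (w : Euc n → Euc n) : ℝ≥0∞ :=
  ∫⁻ x in Ω, φ x ‖w x‖

/-- The conjugate Φ-function `φ*(x,t) = sup_{s ≥ 0} (st − φ(x,s))`. -/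
def conj (φ : Euc n → ℝ → ℝ≥0∞) (x : Euc n) (t : ℝ) : ℝ≥0∞ :=
  ⨆ s : {s : ℝ // 0 ≤ s}, ENNReal.ofReal ((s : ℝ) * t) - φ x (s : ℝ)

/-- The Luxemburg (quasi)norm of a scalar function. -/
def luxNorm (Ω : Set (Euc n)) (φ : Euc n → ℝ → ℝ≥0∞) (f : Euc n → ℝ) : ℝ≥0∞ :=
  ⨅ l ∈ {l : ℝ | 0 < l ∧ modular Ω φ (fun x => f x / l) ≤ 1}, ENNReal.ofReal l

/-- The Luxemburg (quasi)norm of a vector-valued function. -/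
def luxNormV (Ω : Set (Euc n)) (φ : Euc n → ℝ → ℝ≥0∞) (w : Euc n → Euc n) : ℝ≥0∞ :=
  ⨅ l ∈ {l : ℝ | 0 < l ∧ vmodular Ω φ (fun x => (l⁻¹ : ℝ) • w x) ≤ 1}, ENNReal.ofReal l

/-- The dual norm `V_φ(u)`. -/
def Vphi (Ω : Set (Euc n)) (φ : Euc n → ℝ → ℝ≥0∞) (u : Euc n → ℝ) : ℝ≥0∞ :=
  ⨆ w ∈ {w : Euc n → Euc n | IsTestField Ω w ∧ luxNormV Ω (conj φ) w ≤ 1},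
    ENNReal.ofReal (∫ x in Ω, u x * divg w x)

/-- The dual modular `ρ_{V,φ}(u)`. -/
def rhoV (Ω : Set (Euc n)) (φ : Euc n → ℝ → ℝ≥0∞) (u : Euc n → ℝ) : ℝ≥0∞ :=
  ⨆ w ∈ {w : Euc n → Euc n | IsTestField Ω w},
    (ENNReal.ofReal (∫ x in Ω, u x * divg w x) - vmodular Ω (conj φ) w)

/-- The recession function `φ'_∞(x) = limsup_{t→∞} φ(x,t)/t`. -/
def recession (φ : Euc n → ℝ → ℝ≥0∞) (x : Euc n) : ℝ≥0∞ :=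
  Filter.limsup (fun t : ℝ => φ x t / ENNReal.ofReal t) Filter.atTop

/-- `φ` is a weak Φ-function on `Ω`. -/
structure IsWeakPhi (Ω : Set (Euc n)) (φ : Euc n → ℝ → ℝ≥0∞) : Prop where
  meas : ∀ f : Euc n → ℝ, Measurable f → Measurable fun x => φ x |f x|
  mono : ∀ x ∈ Ω, ∀ s t : ℝ, 0 ≤ s → s ≤ t → φ x s ≤ φ x t
  zero : ∀ x ∈ Ω, φ x 0 = 0
  lim_zero : ∀ x ∈ Ω, Tendsto (φ x) (𝓝[>] (0 : ℝ)) (𝓝 0)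
  lim_top : ∀ x ∈ Ω, Tendsto (φ x) atTop (𝓝 ∞)
  aInc1 : ∃ L : ℝ≥0∞, 1 ≤ L ∧ ∀ x ∈ Ω, ∀ s t : ℝ, 0 < s → s ≤ t →
    φ x s / ENNReal.ofReal s ≤ L * (φ x t / ENNReal.ofReal t)

/-- `φ` is a convex Φ-function on `Ω`. -/
structure IsConvexPhi (Ω : Set (Euc n)) (φ : Euc n → ℝ → ℝ≥0∞)
    extends IsWeakPhi Ω φ : Prop where
  convex : ∀ x ∈ Ω, ∀ a b θ : ℝ, 0 ≤ a → 0 ≤ b → θ ∈ Icc (0 : ℝ) 1 →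
    φ x (θ * a + (1 - θ) * b) ≤ ENNReal.ofReal θ * φ x a + ENNReal.ofReal (1 - θ) * φ x b
  left_cont : ∀ x ∈ Ω, ∀ t : ℝ, 0 < t → Tendsto (φ x) (𝓝[<] t) (𝓝 (φ x t))

/-- The condition (A0). -/
def A0 (Ω : Set (Euc n)) (φ : Euc n → ℝ → ℝ≥0∞) : Prop :=
  ∃ β : ℝ, 0 < β ∧ β ≤ 1 ∧ ∀ x ∈ Ω, φ x β ≤ 1 ∧ 1 ≤ φ x β⁻¹

/-- The condition (A1). -/
def A1 (Ω : Set (Euc n)) (φ : Euc n → ℝ → ℝ≥0∞) : Prop :=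
  ∀ K : ℝ, 0 < K → ∃ β : ℝ, 0 < β ∧ β ≤ 1 ∧
    ∀ x ∈ Ω, ∀ y ∈ Ω, ∀ t : ℝ, 0 ≤ t →
      φ y t ≤ ENNReal.ofReal K / ENNReal.ofReal (dist x y ^ n) →
      φ x (β * t) ≤ φ y t + 1

/-- `ω` is a modulus of continuity. -/
def IsModulus (ω : ℝ → ℝ≥0∞) : Prop :=
  (∀ s t : ℝ, 0 ≤ s → s ≤ t → ω s ≤ ω t) ∧ ω 0 = 0 ∧ Tendsto ω (𝓝[>] (0 : ℝ)) (𝓝 0)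

/-- The (VA1) inequality for a given constant `K` and modulus of continuity `ω`. -/
def VA1With (Ω : Set (Euc n)) (φ : Euc n → ℝ → ℝ≥0∞) (K : ℝ) (ω : ℝ → ℝ≥0∞) : Prop :=
  ∀ x ∈ Ω, ∀ y ∈ Ω, ∀ t : ℝ, 0 ≤ t →
    φ y t ≤ ENNReal.ofReal K / ENNReal.ofReal (dist x y ^ n) →
    φ x (t * ((1 + ω (dist x y))⁻¹).toReal) ≤ φ y t + ω (dist x y)

/-- The condition (VA1). -/
def VA1 (Ω : Set (Euc n)) (φ : Euc n → ℝ → ℝ≥0∞) : Prop :=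
  ∀ K : ℝ, 0 < K → ∃ ω : ℝ → ℝ≥0∞, IsModulus ω ∧ VA1With Ω φ K ω

/-- The restricted (VA1) condition: (A1) together with the (VA1) inequality whenever
one of the two points has finite recession function. -/
def RestrictedVA1 (Ω : Set (Euc n)) (φ : Euc n → ℝ → ℝ≥0∞) : Prop :=
  A1 Ω φ ∧ ∀ K : ℝ, 0 < K → ∃ ω : ℝ → ℝ≥0∞, IsModulus ω ∧
    ∀ x ∈ Ω, ∀ y ∈ Ω, (recession φ x < ∞ ∨ recession φ y < ∞) →
      ∀ t : ℝ, 0 ≤ t →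
        φ y t ≤ ENNReal.ofReal K / ENNReal.ofReal (dist x y ^ n) →
        φ x (t * ((1 + ω (dist x y))⁻¹).toReal) ≤ φ y t + ω (dist x y)

/-- The condition (aDec)_q. -/
def aDecAt (Ω : Set (Euc n)) (φ : Euc n → ℝ → ℝ≥0∞) (q : ℝ) : Prop :=
  ∃ L : ℝ≥0∞, 1 ≤ L ∧ ∀ x ∈ Ω, ∀ s t : ℝ, 0 < s → s ≤ t →
    φ x t / ENNReal.ofReal (t ^ q) ≤ L * (φ x s / ENNReal.ofReal (s ^ q))

/-- The condition (aDec): (aDec)_q for some finite `q`. -/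
def aDec (Ω : Set (Euc n)) (φ : Euc n → ℝ → ℝ≥0∞) : Prop :=
  ∃ q : ℝ, aDecAt Ω φ q

/-- Membership in the generalized Orlicz space `L^φ(Ω)`. -/
def MemLphi (Ω : Set (Euc n)) (φ : Euc n → ℝ → ℝ≥0∞) (u : Euc n → ℝ) : Prop :=
  Measurable u ∧ ∃ l : ℝ, 0 < l ∧ modular Ω φ (fun x => l * u x) < ∞

/-- Membership in `BV^φ(Ω)`. -/
def MemBVphi (Ω : Set (Euc n)) (φ : Euc n → ℝ → ℝ≥0∞) (u : Euc n → ℝ) : Prop :=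
  MemLphi Ω φ u ∧ Integrable u (volume.restrict Ω) ∧
    luxNorm Ω φ u + Vphi Ω φ u < ∞

/-- `g` is the distributional (weak) gradient of `u` in `Ω`. -/
def HasWeakGradientOn (Ω : Set (Euc n)) (u : Euc n → ℝ) (g : Euc n → Euc n) : Prop :=
  ∀ w : Euc n → Euc n, IsTestField Ω w →
    ∫ x in Ω, u x * divg w x = -∫ x in Ω, (inner ℝ (g x) (w x) : ℝ)

/-- A decomposition `Du = ∇ᵃu·dx + σ·dν` of the derivative measure of a BV function `u`,
where `ν = |Dˢu|` is the total variation of the singular part and `σ` its polar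
(a unit vector field `ν`-a.e.). -/
def IsBVDecomp (Ω : Set (Euc n)) (u : Euc n → ℝ) (ga : Euc n → Euc n)
    (ν : Measure (Euc n)) (σ : Euc n → Euc n) : Prop :=
  Integrable u (volume.restrict Ω) ∧
  Integrable ga (volume.restrict Ω) ∧
  IsFiniteMeasure ν ∧ ν Ωᶜ = 0 ∧ Measure.MutuallySingular ν volume ∧
  (∀ᵐ x ∂ν, ‖σ x‖ = 1) ∧
  (∀ w : Euc n → Euc n, IsTestField Ω w →
    ∫ x in Ω, u x * divg w x =
      -((∫ x in Ω, (inner ℝ (ga x) (w x) : ℝ)) + ∫ x, (inner ℝ (σ x) (w x) : ℝ) ∂ν))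

/-- The Luxemburg seminorm generated by the dual modular `ρ_{V,φ}`. -/
def luxV (Ω : Set (Euc n)) (φ : Euc n → ℝ → ℝ≥0∞) (u : Euc n → ℝ) : ℝ≥0∞ :=
  ⨅ l ∈ {l : ℝ | 0 < l ∧ rhoV Ω φ (fun x => u x / l) ≤ 1}, ENNReal.ofReal l

section Aux

lemma isTestField_smul' {Ω : Set (Euc n)} {w : Euc n → Euc n} (h : IsTestField Ω w) (c : ℝ) :
    IsTestField Ω (fun x => c • w x) := by
  obtain ⟨h1, h2, h3⟩ := h
  have hsub : tsupport (fun x => c • w x) ⊆ tsupport w := by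
    apply closure_mono
    intro x hx
    simp only [Function.mem_support] at hx ⊢
    intro h0; exact hx (by rw [h0, smul_zero])
  exact ⟨h1.const_smul c, h2.of_isClosed_subset (isClosed_tsupport _) hsub, hsub.trans h3⟩

lemma divg_const_smul' {w : Euc n → Euc n} (hw : ContDiff ℝ 1 w) (c : ℝ) (x : Euc n) :
    divg (fun y => c • w y) x = c * divg w x := by
  have hd : DifferentiableAt ℝ w x := (hw.differentiable one_ne_zero).differentiableAt
  unfold divg
  rw [fderiv_fun_const_smul hd c, Finset.mul_sum]
  refine Finset.sum_congr rfl fun i _ => ?_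
  simp [smul_eq_mul]

lemma integral_divg_smul' {Ω : Set (Euc n)} {u : Euc n → ℝ} {w : Euc n → Euc n}
    (hw : ContDiff ℝ 1 w) (a c : ℝ) :
    ∫ x in Ω, (a * u x) * divg (fun y => c • w y) x
      = (a * c) * ∫ x in Ω, u x * divg w x := by
  have h : ∀ x : Euc n, (a * u x) * divg (fun y => c • w y) x
      = (a * c) • (u x * divg w x) := by
    intro x
    rw [divg_const_smul' hw c x, smul_eq_mul]
    ring
  simp_rw [h]
  exact integral_smul _ _

lemma conj_inv_smul_le {φ : Euc n → ℝ → ℝ≥0∞} (x : Euc n) {c t : ℝ} (hc : 1 ≤ c)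
    (ht : 0 ≤ t) :
    conj φ x (c⁻¹ * t) ≤ conj φ x t / ENNReal.ofReal c := by
  have hc0 : 0 < c := lt_of_lt_of_le one_pos hc
  have hC1 : 1 ≤ ENNReal.ofReal c := by
    rw [← ENNReal.ofReal_one]; exact ENNReal.ofReal_le_ofReal hc
  refine iSup_le fun s => ?_
  set C := ENNReal.ofReal c with hC
  have h1 : ENNReal.ofReal ((s : ℝ) * (c⁻¹ * t)) = ENNReal.ofReal ((s : ℝ) * t) / C := by
    rw [show (s : ℝ) * (c⁻¹ * t) = ((s : ℝ) * t) / c by ring, ENNReal.ofReal_div_of_pos hc0]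
  rw [h1]
  set a := ENNReal.ofReal ((s : ℝ) * t)
  set b := φ x (s : ℝ)
  have hbC : b / C ≤ b := by
    rw [div_eq_mul_inv]
    calc b * C⁻¹ ≤ b * 1 := mul_le_mul_right (ENNReal.inv_le_one.mpr hC1) b
    _ = b := mul_one b
  calc a / C - b ≤ (a - b) / C := by
        rw [tsub_le_iff_right]
        calc a / C ≤ (a - b + b) / C := by gcongr; exact le_tsub_add
        _ = (a - b) / C + b / C := by
            rw [div_eq_mul_inv, div_eq_mul_inv, div_eq_mul_inv, add_mul]
        _ ≤ (a - b) / C + b := by gcongr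
  _ ≤ (conj φ x t) / C := by
        gcongr
        exact le_iSup (fun s : {s : ℝ // 0 ≤ s} =>
          ENNReal.ofReal ((s : ℝ) * t) - φ x (s : ℝ)) s

lemma vmodular_inv_smul_le {Ω : Set (Euc n)} {φ : Euc n → ℝ → ℝ≥0∞} {w : Euc n → Euc n}
    {c : ℝ} (hc : 1 ≤ c) :
    vmodular Ω (conj φ) (fun x => c⁻¹ • w x)
      ≤ vmodular Ω (conj φ) w / ENNReal.ofReal c := by
  have hc0 : 0 < c := lt_of_lt_of_le one_pos hc
  have hC0 : ENNReal.ofReal c ≠ 0 := (ENNReal.ofReal_pos.mpr hc0).ne'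
  unfold vmodular
  have hpt : ∀ x : Euc n, conj φ x ‖c⁻¹ • w x‖ ≤ conj φ x ‖w x‖ / ENNReal.ofReal c := by
    intro x
    have hn : ‖c⁻¹ • w x‖ = c⁻¹ * ‖w x‖ := by
      rw [norm_smul, Real.norm_eq_abs, abs_of_pos (inv_pos.mpr hc0)]
    rw [hn]
    exact conj_inv_smul_le x hc (norm_nonneg _)
  calc ∫⁻ x in Ω, conj φ x ‖c⁻¹ • w x‖
      ≤ ∫⁻ x in Ω, conj φ x ‖w x‖ / ENNReal.ofReal c := lintegral_mono hpt
  _ = (∫⁻ x in Ω, conj φ x ‖w x‖) / ENNReal.ofReal c := by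
      simp_rw [div_eq_mul_inv, mul_comm _ (ENNReal.ofReal c)⁻¹]
      rw [lintegral_const_mul' _ _ (ENNReal.inv_ne_top.mpr hC0), mul_comm]

end Aux

set_option maxHeartbeats 1000000

/-- If `φ ∈ Φ_w(Ω)` and `u ∈ BV^φ(Ω)`, then
`‖u‖_{ρ_{V,φ}} ≤ V_φ(u) ≤ 2‖u‖_{ρ_{V,φ}}`. -/
theorem statement6 (n : ℕ) (Ω : Set (Euc n)) (hΩ : IsBoundedDomain Ω)
    (φ : Euc n → ℝ → ℝ≥0∞) (hφ : IsWeakPhi Ω φ)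
    (u : Euc n → ℝ) (hu : MemBVphi Ω φ u) :
    luxV Ω φ u ≤ Vphi Ω φ u ∧ Vphi Ω φ u ≤ 2 * luxV Ω φ u := by
  have hVfin : Vphi Ω φ u < ∞ := lt_of_le_of_lt le_add_self hu.2.2
  -- Key step for the first inequality.
  have keyA : ∀ l : ℝ, 0 < l → Vphi Ω φ u ≤ ENNReal.ofReal l →
      rhoV Ω φ (fun x => u x / l) ≤ 1 := by
    intro l hl hVl
    refine iSup₂_le fun w hw => ?_
    have hw' : IsTestField Ω w := hw
    rw [tsub_le_iff_right]
    set m := vmodular Ω (conj φ) w with hm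
    by_cases hminf : m = ∞
    · rw [hminf]; simp
    set c := max m.toReal 1 with hcdef
    have hc1 : 1 ≤ c := le_max_right _ _
    have hc0 : 0 < c := lt_of_lt_of_le one_pos hc1
    have hmc : m ≤ ENNReal.ofReal c := by
      rw [← ENNReal.ofReal_toReal hminf]
      exact ENNReal.ofReal_le_ofReal (le_max_left _ _)
    have hv : IsTestField Ω (fun x => c⁻¹ • w x) := isTestField_smul' hw' c⁻¹
    have hvmod : vmodular Ω (conj φ) (fun x => c⁻¹ • w x) ≤ 1 := by
      refine le_trans (vmodular_inv_smul_le hc1) ?_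
      exact ENNReal.div_le_of_le_mul (by rw [one_mul]; exact hmc)
    have hvnorm : luxNormV Ω (conj φ) (fun x => c⁻¹ • w x) ≤ 1 := by
      rw [luxNormV]
      refine le_trans (iInf₂_le (1 : ℝ) ⟨one_pos, ?_⟩) (by simp)
      simpa using hvmod
    set I := ∫ x in Ω, u x * divg w x with hI
    have hVv : ENNReal.ofReal (c⁻¹ * I) ≤ ENNReal.ofReal l := by
      have hle : ENNReal.ofReal (∫ x in Ω, u x * divg (fun y => c⁻¹ • w y) x)
          ≤ Vphi Ω φ u :=
        le_iSup₂ (f := fun (w : Euc n → Euc n)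
          (_ : w ∈ {w : Euc n → Euc n | IsTestField Ω w ∧ luxNormV Ω (conj φ) w ≤ 1}) =>
          ENNReal.ofReal (∫ x in Ω, u x * divg w x)) _ ⟨hv, hvnorm⟩
      have heq : ∫ x in Ω, u x * divg (fun y => c⁻¹ • w y) x = c⁻¹ * I := by
        have := integral_divg_smul' (Ω := Ω) (u := u) hw'.1 1 c⁻¹
        simpa using this
      rw [heq] at hle
      exact le_trans hle hVl
    have hIc : c⁻¹ * I ≤ l := (ENNReal.ofReal_le_ofReal_iff hl.le).mp hVv
    have hIcl : I ≤ c * l := by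
      have h := mul_le_mul_of_nonneg_left hIc hc0.le
      rwa [← mul_assoc, mul_inv_cancel₀ hc0.ne', one_mul] at h
    have hlI : l⁻¹ * I ≤ c := by
      calc l⁻¹ * I ≤ l⁻¹ * (c * l) := mul_le_mul_of_nonneg_left hIcl (inv_nonneg.mpr hl.le)
      _ = c := by field_simp
    have heq2 : ∫ x in Ω, (u x / l) * divg w x = l⁻¹ * I := by
      have h : ∀ x : Euc n, (u x / l) * divg w x = l⁻¹ • (u x * divg w x) := by
        intro x; rw [smul_eq_mul]; ring
      simp_rw [h]
      exact integral_smul _ _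
    calc ENNReal.ofReal (∫ x in Ω, (u x / l) * divg w x)
        = ENNReal.ofReal (l⁻¹ * I) := by rw [heq2]
    _ ≤ ENNReal.ofReal c := ENNReal.ofReal_le_ofReal hlI
    _ ≤ ENNReal.ofReal (1 + m.toReal) := by
        refine ENNReal.ofReal_le_ofReal (max_le ?_ ?_)
        · linarith
        · have := ENNReal.toReal_nonneg (a := m); linarith
    _ = 1 + m := by
        rw [ENNReal.ofReal_add zero_le_one ENNReal.toReal_nonneg, ENNReal.ofReal_one,
          ENNReal.ofReal_toReal hminf]
  -- Key step for the second inequality.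
  have keyB : ∀ l : ℝ, 0 < l → rhoV Ω φ (fun x => u x / l) ≤ 1 →
      Vphi Ω φ u ≤ ENNReal.ofReal (2 * l) := by
    intro l hl hrho
    refine iSup₂_le fun w hw => ?_
    obtain ⟨hwt, hwn⟩ := hw
    refine ENNReal.ofReal_le_ofReal ?_
    set I := ∫ x in Ω, u x * divg w x with hI
    refine le_of_forall_pos_le_add fun δ hδ => ?_
    set ε := δ / (2 * l) with hεdef
    have hε : 0 < ε := div_pos hδ (by linarith)
    have hlt : luxNormV Ω (conj φ) w < ENNReal.ofReal (1 + ε) := by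
      refine lt_of_le_of_lt hwn ?_
      rw [← ENNReal.ofReal_one]
      exact (ENNReal.ofReal_lt_ofReal_iff (by linarith)).mpr (by linarith)
    obtain ⟨l₀, hl₀⟩ := iInf_lt_iff.mp hlt
    obtain ⟨hl₀mem, hl₀lt⟩ := iInf_lt_iff.mp hl₀
    have hl₀pos : 0 < l₀ := hl₀mem.1
    have hl₀ε : l₀ < 1 + ε :=
      (ENNReal.ofReal_lt_ofReal_iff_of_nonneg hl₀pos.le).mp hl₀lt
    have hvmod : vmodular Ω (conj φ) (fun x => l₀⁻¹ • w x) ≤ 1 := hl₀mem.2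
    have hv : IsTestField Ω (fun x => l₀⁻¹ • w x) := isTestField_smul' hwt l₀⁻¹
    have h1 : ENNReal.ofReal (∫ x in Ω, (u x / l) * divg (fun y => l₀⁻¹ • w y) x)
        - vmodular Ω (conj φ) (fun x => l₀⁻¹ • w x) ≤ 1 := by
      refine le_trans ?_ hrho
      exact le_iSup₂ (f := fun (v : Euc n → Euc n)
        (_ : v ∈ {w : Euc n → Euc n | IsTestField Ω w}) =>
        ENNReal.ofReal (∫ x in Ω, (u x / l) * divg v x)
          - vmodular Ω (conj φ) v) _ hv
    rw [tsub_le_iff_right] at h1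
    have h2 : ENNReal.ofReal (∫ x in Ω, (u x / l) * divg (fun y => l₀⁻¹ • w y) x)
        ≤ ENNReal.ofReal 2 := by
      refine le_trans h1 ?_
      calc (1 : ℝ≥0∞) + vmodular Ω (conj φ) (fun x => l₀⁻¹ • w x)
          ≤ 1 + 1 := add_le_add_right hvmod 1
      _ = ENNReal.ofReal 2 := by norm_num
    have heq : ∫ x in Ω, (u x / l) * divg (fun y => l₀⁻¹ • w y) x
        = (l⁻¹ * l₀⁻¹) * I := by
      have h := integral_divg_smul' (Ω := Ω) (u := u) hwt.1 l⁻¹ l₀⁻¹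
      simp_rw [show ∀ x : Euc n, u x / l = l⁻¹ * u x from fun x => by ring] at *
      exact h
    rw [heq] at h2
    have h3 : (l⁻¹ * l₀⁻¹) * I ≤ 2 :=
      (ENNReal.ofReal_le_ofReal_iff (by norm_num)).mp h2
    have h4 : I ≤ 2 * l * l₀ := by
      have h := mul_le_mul_of_nonneg_left h3 (mul_pos hl hl₀pos).le
      have hne : l * l₀ ≠ 0 := (mul_pos hl hl₀pos).ne'
      calc I = (l * l₀) * ((l⁻¹ * l₀⁻¹) * I) := by field_simp
      _ ≤ (l * l₀) * 2 := mul_le_mul_of_nonneg_left h3 (mul_pos hl hl₀pos).le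
      _ = 2 * l * l₀ := by ring
    calc I ≤ 2 * l * l₀ := h4
    _ ≤ 2 * l * (1 + ε) := by nlinarith
    _ = 2 * l + δ := by rw [hεdef]; field_simp
  constructor
  · -- luxV ≤ Vphi
    refine ENNReal.le_of_forall_pos_le_add fun ε hε hfin => ?_
    have hl : 0 < (Vphi Ω φ u).toReal + (ε : ℝ) :=
      add_pos_of_nonneg_of_pos ENNReal.toReal_nonneg (by exact_mod_cast hε)
    have hVl : Vphi Ω φ u ≤ ENNReal.ofReal ((Vphi Ω φ u).toReal + (ε : ℝ)) := by
      calc Vphi Ω φ u = ENNReal.ofReal (Vphi Ω φ u).toReal :=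
        (ENNReal.ofReal_toReal hVfin.ne).symm
      _ ≤ _ := ENNReal.ofReal_le_ofReal (le_add_of_nonneg_right ε.2)
    calc luxV Ω φ u ≤ ENNReal.ofReal ((Vphi Ω φ u).toReal + (ε : ℝ)) :=
      iInf₂_le _ ⟨hl, keyA _ hl hVl⟩
    _ = Vphi Ω φ u + ε := by
        rw [ENNReal.ofReal_add ENNReal.toReal_nonneg ε.coe_nonneg,
          ENNReal.ofReal_toReal hVfin.ne, ENNReal.ofReal_coe_nnreal]
  · -- Vphi ≤ 2 luxV
    have h2 : Vphi Ω φ u / 2 ≤ luxV Ω φ u := by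
      refine le_iInf₂ fun l hl => ?_
      have hkey : Vphi Ω φ u ≤ ENNReal.ofReal (2 * l) := keyB l hl.1 hl.2
      have h2l : ENNReal.ofReal (2 * l) = 2 * ENNReal.ofReal l := by
        rw [ENNReal.ofReal_mul (by norm_num : (0:ℝ) ≤ 2)]
        norm_num
      rw [h2l] at hkey
      calc Vphi Ω φ u / 2 ≤ (2 * ENNReal.ofReal l) / 2 := by gcongr
      _ = ENNReal.ofReal l := by
          rw [mul_comm, mul_div_assoc, ENNReal.div_self (by norm_num) (by norm_num), mul_one]
    calc Vphi Ω φ u = Vphi Ω φ u / 2 * 2 :=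
      (ENNReal.div_mul_cancel (by norm_num) (by norm_num)).symm
    _ ≤ luxV Ω φ u * 2 := mul_le_mul_left h2 2
    _ = 2 * luxV Ω φ u := mul_comm _ _

end
end

section
/- (Weak lower semicontinuity.) Let φ ∈ Φ_w(Ω) and let u, u_k ∈ L¹(Ω) with u_k ⇀ u weakly in L¹(Ω). Then V_φ(u) ≤ liminf_{k→∞} V_φ(u_k) and ρ_{V,φ}(u) ≤ liminf_{k→∞} ρ_{V,φ}(u_k). -/
open MeasureTheory Filter Set Topology Metric
open scoped ENNReal NNReal

noncomputable section

variable {n : ℕ}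

lemma divg_cont {w : Euc n → Euc n} (hw : ContDiff ℝ 1 w) : Continuous (divg w) := by
  apply continuous_finset_sum
  intro i _
  exact (continuous_apply i).comp ((PiLp.continuous_ofLp 2 _).comp
    ((ContinuousLinearMap.apply ℝ (Euc n) (EuclideanSpace.single i 1)).continuous.comp
      (hw.continuous_fderiv one_ne_zero)))

lemma divg_compact_support {w : Euc n → Euc n} (hw : HasCompactSupport w) :
    HasCompactSupport (divg w) := by
  have := hw.fderiv (𝕜 := ℝ)
  exact this.comp_left (g := fun L : Euc n →L[ℝ] Euc n =>
    ∑ i, L (EuclideanSpace.single i 1) i) (by simp)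

lemma divg_bound {Ω : Set (Euc n)} {w : Euc n → Euc n} (hw : IsTestField Ω w) :
    Measurable (divg w) ∧ ∃ C : ℝ, ∀ x, |divg w x| ≤ C := by
  refine ⟨(divg_cont hw.1).measurable, ?_⟩
  obtain ⟨C, hC⟩ := (divg_compact_support hw.2.1).exists_bound_of_continuous (divg_cont hw.1)
  exact ⟨C, fun x => by simpa using hC x⟩

/-- Weak lower semicontinuity of `V_φ` and `ρ_{V,φ}` along sequences
converging weakly in `L¹(Ω)`. -/
theorem statement7 (n : ℕ) (Ω : Set (Euc n)) (hΩ : IsBoundedDomain Ω)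
    (φ : Euc n → ℝ → ℝ≥0∞) (hφ : IsWeakPhi Ω φ)
    (u : Euc n → ℝ) (uk : ℕ → Euc n → ℝ)
    (hu : Integrable u (volume.restrict Ω))
    (huk : ∀ k, Integrable (uk k) (volume.restrict Ω))
    (hweak : ∀ g : Euc n → ℝ, Measurable g → (∃ C : ℝ, ∀ x, |g x| ≤ C) →
      Tendsto (fun k => ∫ x in Ω, uk k x * g x) atTop (𝓝 (∫ x in Ω, u x * g x))) :
    Vphi Ω φ u ≤ Filter.liminf (fun k => Vphi Ω φ (uk k)) atTop ∧
    rhoV Ω φ u ≤ Filter.liminf (fun k => rhoV Ω φ (uk k)) atTop := by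
  constructor
  · refine iSup₂_le fun w hw => ?_
    obtain ⟨hmeas, hbd⟩ := divg_bound hw.1
    have ht : Tendsto (fun k => ∫ x in Ω, uk k x * divg w x) atTop
        (𝓝 (∫ x in Ω, u x * divg w x)) := hweak _ hmeas hbd
    have ht2 : Tendsto (fun k => ENNReal.ofReal (∫ x in Ω, uk k x * divg w x)) atTop
        (𝓝 (ENNReal.ofReal (∫ x in Ω, u x * divg w x))) :=
      (ENNReal.continuous_ofReal.tendsto _).comp ht
    calc ENNReal.ofReal (∫ x in Ω, u x * divg w x)
        = Filter.liminf (fun k => ENNReal.ofReal (∫ x in Ω, uk k x * divg w x)) atTop :=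
          ht2.liminf_eq.symm
      _ ≤ Filter.liminf (fun k => Vphi Ω φ (uk k)) atTop := by
          refine Filter.liminf_le_liminf (Filter.Eventually.of_forall fun k => ?_)
          exact le_iSup₂ (f := fun w (_ : w ∈ {w : Euc n → Euc n |
            IsTestField Ω w ∧ luxNormV Ω (conj φ) w ≤ 1}) =>
            ENNReal.ofReal (∫ x in Ω, uk k x * divg w x)) w hw
  · refine iSup₂_le fun w hw => ?_
    obtain ⟨hmeas, hbd⟩ := divg_bound hw
    have ht : Tendsto (fun k => ∫ x in Ω, uk k x * divg w x) atTop
        (𝓝 (∫ x in Ω, u x * divg w x)) := hweak _ hmeas hbd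
    have ht2 : Tendsto (fun k =>
        ENNReal.ofReal (∫ x in Ω, uk k x * divg w x) - vmodular Ω (conj φ) w) atTop
        (𝓝 (ENNReal.ofReal (∫ x in Ω, u x * divg w x) - vmodular Ω (conj φ) w)) :=
      ((ENNReal.continuous_sub_right _).tendsto _).comp
        ((ENNReal.continuous_ofReal.tendsto _).comp ht)
    calc ENNReal.ofReal (∫ x in Ω, u x * divg w x) - vmodular Ω (conj φ) w
        = Filter.liminf (fun k =>
            ENNReal.ofReal (∫ x in Ω, uk k x * divg w x) - vmodular Ω (conj φ) w) atTop :=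
          ht2.liminf_eq.symm
      _ ≤ Filter.liminf (fun k => rhoV Ω φ (uk k)) atTop := by
          refine Filter.liminf_le_liminf (Filter.Eventually.of_forall fun k => ?_)
          exact le_iSup₂ (f := fun w (_ : w ∈ {w : Euc n → Euc n | IsTestField Ω w}) =>
            ENNReal.ofReal (∫ x in Ω, uk k x * divg w x) - vmodular Ω (conj φ) w) w hw

end
end
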